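/- Suppose M = ℂ[d_0]v is a W_1^+-module free of rank 1 over ℂ[d_0], with d_1·v = λ(d_0 - a)v and d_{-1}·v = λ^{-1}(d_0 + a)v for some λ ∈ ℂ*, a ∈ ℂ. If d_2·v = f_2(d_0)v, then necessarily f_2(d_0) = λ^2(d_0 - 2a), i.e. d_2·v = λ^2(d_0 - 2a)v. -/

import Mathlib

open Polynomial

set_option maxHeartbeats 1000000 in
/-- for a `W_1^+`-module `M = ℂ[d_0]v` free of rank 1 over `ℂ[d_0]`
(with `d_0` acting by multiplication), if `d_1·v = λ(d_0-a)v` and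
`d_{-1}·v = λ⁻¹(d_0+a)v`, then `d_2·v = λ²(d_0-2a)v`. -/
theorem d_two_action_case_one (l a : ℂ) (hl : l ≠ 0)
    (D : ℤ → Polynomial ℂ →ₗ[ℂ] Polynomial ℂ)
    (h0 : ∀ f : Polynomial ℂ, D 0 f = X * f)
    (hbr : ∀ i j : ℤ, -1 ≤ i → -1 ≤ j → ∀ f : Polynomial ℂ,
      D i (D j f) - D j (D i f) = ((j : ℂ) - (i : ℂ)) • D (i + j) f)
    (h1 : D 1 1 = l • (X - C a))
    (hm1 : D (-1) 1 = l⁻¹ • (X + C a)) :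
    D 2 1 = l ^ 2 • (X - C (2 * a)) := by
  -- Rule for multiplication by X
  have hX : ∀ i : ℤ, -1 ≤ i → ∀ f : Polynomial ℂ,
      D i (X * f) = (X - C (i : ℂ)) * D i f := by
    intro i hi f
    have h := hbr i 0 hi (by norm_num) f
    rw [h0 f, h0 (D i f), add_zero] at h
    push_cast at h
    rw [zero_sub] at h
    have h2 : D i (X * f) = X * D i f + (-(i : ℂ)) • D i f := by
      linear_combination h
    rw [h2, smul_eq_C_mul, C_neg]
    ring
  -- Composition formula
  have hcomp : ∀ i : ℤ, -1 ≤ i → ∀ f : Polynomial ℂ,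
      D i f = f.comp (X - C (i : ℂ)) * D i 1 := by
    intro i hi f
    induction f using Polynomial.induction_on with
    | C c =>
      have hc : (C c : Polynomial ℂ) = c • (1 : Polynomial ℂ) := by
        simp [smul_eq_C_mul]
      rw [hc, map_smul]
      simp [smul_eq_C_mul]
    | add f g hf hg =>
      rw [map_add, hf, hg, add_comp, add_mul]
    | monomial n c ih =>
      have hrw : (C c * X ^ (n + 1) : Polynomial ℂ) = X * (C c * X ^ n) := by ring
      rw [hrw, hX i hi, ih]
      simp only [mul_comp, X_comp]
      ring
  have hlk : (C l : Polynomial ℂ) * C l⁻¹ = 1 := by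
    rw [← C_mul, mul_inv_cancel₀ hl, C_1]
  set p : Polynomial ℂ := D 2 1 with hp
  set s : Polynomial ℂ := p.comp (X + 1) with hs
  -- The key bracket relation applied to 1
  have key := hbr (-1) 2 (le_refl _) (by norm_num) 1
  rw [show ((-1 : ℤ) + 2) = 1 by norm_num, h1] at key
  rw [hcomp (-1) (le_refl _) (D 2 1), hcomp 2 (by norm_num) (D (-1) 1), hm1,
    smul_comp] at key
  have e1 : (X + C a).comp (X - C ((2 : ℤ) : ℂ)) = X - C 2 + C a := by
    push_cast
    simp [add_comp]
  have e2 : (X : Polynomial ℂ) - C (((-1) : ℤ) : ℂ) = X + 1 := by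
    simp only [Int.cast_neg, Int.cast_one, map_neg, map_one]
    ring
  rw [e1, e2] at key
  push_cast at key
  norm_num at key
  simp only [smul_eq_C_mul] at key
  -- key is now an identity of polynomials; clear the l⁻¹
  have key2 : s * (X + C a) - (X + C a - C 2) * p =
      C 3 * (C l * (C l * (X - C a))) := by
    linear_combination C l * key - (s * (X + C a) - (X + C a - C 2) * p) * hlk
  set q : Polynomial ℂ := p - C l * C l * (X - C (2 * a)) with hqdef
  have hqc : q.comp (X + 1) = s - C l * C l * (X + 1 - C (2 * a)) := by
    rw [hqdef]
    simp only [sub_comp, mul_comp, C_comp, X_comp]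
    rfl
  have hfe : q.comp (X + 1) * (X + C a) = (X + C a - C 2) * q := by
    have c2 : (C (2 : ℂ) : Polynomial ℂ) = 2 := map_ofNat C 2
    have c3 : (C (3 : ℂ) : Polynomial ℂ) = 3 := map_ofNat C 3
    have c2a : (C (2 * a) : Polynomial ℂ) = 2 * C a := by rw [C_mul, c2]
    rw [hqc, hqdef]
    simp only [c2, c3, c2a] at key2 ⊢
    linear_combination key2
  have heval : ∀ x : ℂ, q.eval (x + 1) * (x + a) = (x + a - 2) * q.eval x := by
    intro x
    have := congrArg (eval x) hfe
    simpa [eval_comp] using this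
  have hroot : ∀ n : ℕ, q.eval ((n : ℂ) + 3 - a) = 0 := by
    intro n
    induction n with
    | zero =>
      have h := heval (2 - a)
      have h3 : (2 - a + 1 : ℂ) = 3 - a := by ring
      rw [h3] at h
      have h4 : q.eval (3 - a) = 0 := by linear_combination h / 2
      simpa using h4
    | succ k ih =>
      have h := heval ((k : ℂ) + 3 - a)
      have e3 : ((k : ℂ) + 3 - a + 1) = (((k + 1 : ℕ) : ℂ) + 3 - a) := by
        push_cast; ring
      rw [e3, ih, mul_zero, show ((k : ℂ) + 3 - a + a) = (k : ℂ) + 3 by ring] at h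
      have hne : ((k : ℂ) + 3) ≠ 0 := by
        have : ((k : ℂ) + 3) = ((k + 3 : ℕ) : ℂ) := by push_cast; ring
        rw [this]
        exact_mod_cast Nat.succ_ne_zero (k + 2)
      exact (mul_eq_zero.mp h).resolve_right hne
  have hq0 : q = 0 := by
    apply Polynomial.eq_zero_of_infinite_isRoot
    apply Set.Infinite.mono (s := Set.range (fun n : ℕ => (n : ℂ) + 3 - a))
    · rintro x ⟨n, rfl⟩
      exact hroot n
    · apply Set.infinite_range_of_injective
      intro m n h
      have : (m : ℂ) = (n : ℂ) := by linear_combination h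
      exact_mod_cast this
  have hfin : p = C l * C l * (X - C (2 * a)) := by
    have := hq0
    rw [hqdef] at this
    linear_combination this
  rw [hfin, smul_eq_C_mul, pow_two, C_mul, C_mul]
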